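/- Let Λ = ℤℓ ⊕ E₈(−2) with (ℓ.ℓ) = 2d, d even. Then there exists an even lattice Λ̃ containing Λ as a sublattice of index 2 such that E₈(−2) is primitively embedded in Λ̃. -/
import Mathlib


/-- Let Λ = ℤℓ ⊕ E₈(−2) with (ℓ.ℓ) = 2d, d even (d > 0), sitting inside
the rational quadratic space V = Λ ⊗ ℚ. The properties of E₈(−2) used are encoded as
hypotheses: all pairings are even, all squares are divisible by 4, and there is a vector
e with (e.e) ≡ −2d (mod 8). Then there exists an even overlattice Λ̃ ⊃ Λ of index 2
(Λ̃ ≠ Λ but 2Λ̃ ⊆ Λ) in which E₈(−2) is primitively embedded. -/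
theorem stmt_6 (V : Type*) [AddCommGroup V] [Module ℚ V]
    (B : V →ₗ[ℚ] V →ₗ[ℚ] ℚ) (hsymm : ∀ u v, B u v = B v u)
    (d : ℤ) (hd : Even d) (hdpos : 0 < d)
    (ℓ : V) (E : Submodule ℤ V)
    (hℓℓ : B ℓ ℓ = 2 * d)
    (horth : ∀ e ∈ E, B ℓ e = 0)
    (hEeven : ∀ e₁ ∈ E, ∀ e₂ ∈ E, ∃ k : ℤ, B e₁ e₂ = 2 * k)
    (hE4 : ∀ e ∈ E, ∃ k : ℤ, B e e = 4 * k)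
    (hrep : ∃ e ∈ E, ∃ k : ℤ, B e e = -2 * d + 8 * k)
    (hℓE : ℓ ∉ Submodule.span ℚ (E : Set V)) :
    ∃ Λ' : Submodule ℤ V,
      (Submodule.span ℤ {ℓ} ⊔ E) ≤ Λ' ∧
      Λ' ≠ (Submodule.span ℤ {ℓ} ⊔ E) ∧
      (∀ w ∈ Λ', (2 : ℤ) • w ∈ (Submodule.span ℤ {ℓ} ⊔ E)) ∧
      (∀ w ∈ Λ', ∃ k : ℤ, B w w = 2 * k) ∧
      (∀ w ∈ Λ', w ∈ Submodule.span ℚ (E : Set V) → w ∈ E) := by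
  obtain ⟨e, heE, k, hek⟩ := hrep
  set v : V := (2:ℚ)⁻¹ • (ℓ + e) with hv
  have heℓ : B e ℓ = 0 := by rw [hsymm]; exact horth e heE
  -- decomposition of elements of the overlattice
  have hmem : ∀ w ∈ (Submodule.span ℤ {ℓ} ⊔ E) ⊔ Submodule.span ℤ {v},
      ∃ n : ℤ, ∃ f ∈ E, ∃ m : ℤ, w = (n:ℚ) • ℓ + f + (m:ℚ) • v := by
    intro w hw
    rw [Submodule.mem_sup] at hw
    obtain ⟨u, hu, z, hz, rfl⟩ := hw
    rw [Submodule.mem_sup] at hu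
    obtain ⟨a, ha, f, hf, rfl⟩ := hu
    rw [Submodule.mem_span_singleton] at ha hz
    obtain ⟨n, rfl⟩ := ha
    obtain ⟨m, rfl⟩ := hz
    exact ⟨n, f, hf, m, by rw [Int.cast_smul_eq_zsmul, Int.cast_smul_eq_zsmul]⟩
  refine ⟨(Submodule.span ℤ {ℓ} ⊔ E) ⊔ Submodule.span ℤ {v}, le_sup_left, ?_, ?_, ?_, ?_⟩
  · -- Λ' ≠ Λ
    intro hEq
    have hvmem : v ∈ (Submodule.span ℤ {ℓ} ⊔ E) := by
      rw [← hEq]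
      exact Submodule.mem_sup_right (Submodule.mem_span_singleton_self v)
    rw [Submodule.mem_sup] at hvmem
    obtain ⟨a, ha, f, hf, hsum⟩ := hvmem
    rw [Submodule.mem_span_singleton] at ha
    obtain ⟨n, rfl⟩ := ha
    have h1 : B ℓ v = d := by
      simp [hv, map_add, map_smul, hℓℓ, horth e heE]
    have h2 : B ℓ (n • ℓ + f) = 2 * d * n := by
      rw [← Int.cast_smul_eq_zsmul ℚ]
      simp [map_add, map_smul, hℓℓ, horth f hf]
      ring
    rw [← hsum, h2] at h1
    have : (d : ℚ) * (2 * n - 1) = 0 := by linarith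
    rcases mul_eq_zero.mp this with h | h
    · exact absurd (by exact_mod_cast h) (by positivity : (0:ℤ) < d).ne'
    · have : (2 * n : ℚ) = 1 := by linarith
      have : (2 * n : ℤ) = 1 := by exact_mod_cast this
      omega
  · -- 2 Λ' ⊆ Λ
    intro w hw
    obtain ⟨n, f, hf, m, rfl⟩ := hmem w hw
    have key : (2:ℤ) • ((n:ℚ) • ℓ + f + (m:ℚ) • v)
        = ((2*n+m : ℤ) • ℓ) + ((2:ℤ) • f + m • e) := by
      rw [← Int.cast_smul_eq_zsmul ℚ ((2:ℤ)) (_ + _ + _),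
          ← Int.cast_smul_eq_zsmul ℚ (2*n+m),
          ← Int.cast_smul_eq_zsmul ℚ (2:ℤ) f,
          ← Int.cast_smul_eq_zsmul ℚ m e, hv]
      push_cast
      match_scalars <;> ring
    rw [key]
    exact Submodule.add_mem_sup
      (Submodule.smul_mem _ _ (Submodule.mem_span_singleton_self ℓ))
      (add_mem (Submodule.smul_mem _ _ hf) (Submodule.smul_mem _ _ heE))
  · -- evenness
    intro w hw
    obtain ⟨n, f, hf, m, rfl⟩ := hmem w hw
    obtain ⟨k₁, hk₁⟩ := hEeven f hf f hf
    obtain ⟨k₂, hk₂⟩ := hEeven e heE f hf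
    have hfe : B f e = 2 * k₂ := by rw [hsymm]; exact hk₂
    have hfl : B f ℓ = 0 := by rw [hsymm]; exact horth f hf
    refine ⟨d*n^2 + d*n*m + k*m^2 + k₁ + k₂*m, ?_⟩
    simp only [hv, map_add, map_smul, LinearMap.add_apply, LinearMap.smul_apply,
      smul_eq_mul, hℓℓ, horth e heE, horth f hf, heℓ, hek, hfe, hk₂, hfl, hk₁]
    push_cast
    ring
  · -- primitivity
    intro w hw hwE
    obtain ⟨n, f, hf, m, rfl⟩ := hmem w hw
    have hker : ∀ x ∈ Submodule.span ℚ (E : Set V), B ℓ x = 0 := by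
      intro x hx
      have : Submodule.span ℚ (E : Set V) ≤ LinearMap.ker (B ℓ) :=
        Submodule.span_le.mpr fun y hy => horth y hy
      exact this hx
    have h0 : B ℓ ((n:ℚ) • ℓ + f + (m:ℚ) • v) = 0 := hker _ hwE
    have h1 : B ℓ ((n:ℚ) • ℓ + f + (m:ℚ) • v) = 2 * d * n + d * m := by
      simp only [hv, map_add, map_smul, smul_eq_mul, hℓℓ, horth e heE, horth f hf]
      ring
    rw [h1] at h0
    have hd0 : (d : ℚ) ≠ 0 := by exact_mod_cast hdpos.ne'
    have hm : (m : ℚ) = -2 * n := by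
      have : (d : ℚ) * (2 * n + m) = 0 := by linarith
      have := (mul_eq_zero.mp this).resolve_left hd0
      linarith
    have hrw : (n:ℚ) • ℓ + f + (m:ℚ) • v = f + ((-n : ℤ) : ℚ) • e := by
      rw [hm, hv]
      push_cast
      match_scalars <;> ring
    rw [hrw, Int.cast_smul_eq_zsmul]
    exact add_mem hf (Submodule.smul_mem _ _ heE)
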